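/- There exists a universal constant K > 0 such that the following holds for all positive integers n and l, all M > 0, all sets 𝔛, all points x = (x₁,…,xₙ) ∈ 𝔛ⁿ, and all families of functions {φ_θ : 𝔛 → ℝ, θ ∈ Θ}: if there is a constant A ≥ 0 with d(θ,θ') ≤ √n · A · ‖θ − θ'‖₂ for all θ, θ' ∈ Θ, then for every θ₀ ∈ Θ one has E sup_{θ∈Θ} |X_θ| ≤ E|X_{θ₀}| + K · √(n · log(l+1)) · log(n+1) · A · M. -/

import Mathlib

open MeasureTheory ProbabilityTheory Real ENNReal

namespace RadAux


noncomputable def sg (b : Bool) : ℝ := if b then 1 else -1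

lemma sg_sq (b : Bool) : sg b ^ 2 = 1 := by cases b <;> simp [sg]

lemma sg_cases (b : Bool) : sg b = 1 ∨ sg b = -1 := by cases b <;> simp [sg]

noncomputable def avgCube {n : ℕ} (f : (Fin n → Bool) → ℝ) : ℝ :=
    (∑ s : Fin n → Bool, f s) / 2 ^ n

lemma card_cube (n : ℕ) : Fintype.card (Fin n → Bool) = 2 ^ n := by
  simp

lemma avgCube_le {n : ℕ} {f g : (Fin n → Bool) → ℝ} (h : ∀ s, f s ≤ g s) :
    avgCube f ≤ avgCube g := by
  unfold avgCube
  apply div_le_div_of_nonneg_right ?_ (by positivity)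
  exact Finset.sum_le_sum fun s _ => h s

lemma avgCube_add {n : ℕ} (f g : (Fin n → Bool) → ℝ) :
    avgCube (fun s => f s + g s) = avgCube f + avgCube g := by
  unfold avgCube
  rw [Finset.sum_add_distrib, add_div]

lemma avgCube_const {n : ℕ} (c : ℝ) : avgCube (fun _ : Fin n → Bool => c) = c := by
  unfold avgCube
  rw [Finset.sum_const, Finset.card_univ, card_cube]
  field_simp
  simp [nsmul_eq_mul]

lemma avgCube_sum {n : ℕ} {κ : Type*} (F : Finset κ) (f : κ → (Fin n → Bool) → ℝ) :
    avgCube (fun s => ∑ k ∈ F, f k s) = ∑ k ∈ F, avgCube (f k) := by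
  unfold avgCube
  rw [Finset.sum_comm, Finset.sum_div]

lemma cube_prod_sum {n : ℕ} (f : Fin n → Bool → ℝ) :
    ∑ s : Fin n → Bool, ∏ i, f i (s i) = ∏ i, (f i true + f i false) := by
  rw [← Fintype.prod_sum]
  congr 1
  funext i
  simp [Fintype.sum_bool]

lemma cube_mgf {n : ℕ} (b : Fin n → ℝ) (t : ℝ) :
    ∑ s : Fin n → Bool, Real.exp (∑ i, t * sg (s i) * b i)
      ≤ 2 ^ n * Real.exp (t ^ 2 * (∑ i, b i ^ 2) / 2) := by
  have h1 : ∀ s : Fin n → Bool, Real.exp (∑ i, t * sg (s i) * b i)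
      = ∏ i, Real.exp (t * sg (s i) * b i) := fun s => Real.exp_sum _ _
  simp_rw [h1]
  rw [cube_prod_sum (fun i c => Real.exp (t * sg c * b i))]
  have h2 : ∀ i : Fin n, Real.exp (t * sg true * b i) + Real.exp (t * sg false * b i)
      = 2 * Real.cosh (t * b i) := by
    intro i
    rw [Real.cosh_eq]
    simp [sg]
    ring
  simp_rw [h2]
  calc ∏ i, 2 * Real.cosh (t * b i)
      ≤ ∏ i, 2 * Real.exp ((t * b i) ^ 2 / 2) := by
        apply Finset.prod_le_prod
        · intro i _
          positivity
        · intro i _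
          have := Real.cosh_le_exp_half_sq (t * b i)
          linarith
    _ = 2 ^ n * Real.exp (t ^ 2 * (∑ i, b i ^ 2) / 2) := by
        rw [Finset.prod_mul_distrib, Finset.prod_const, ← Real.exp_sum]
        simp [Finset.card_univ]
        congr 1
        rw [← Finset.sum_div, Finset.mul_sum]
        congr 1
        apply Finset.sum_congr rfl
        intro i _
        ring

lemma cube_jensen_exp {n : ℕ} (f : (Fin n → Bool) → ℝ) :
    Real.exp (avgCube f) ≤ avgCube (fun s => Real.exp (f s)) := by
  have h := convexOn_exp.map_sum_le (t := (Finset.univ : Finset (Fin n → Bool)))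
    (w := fun _ => ((2:ℝ) ^ n)⁻¹) (p := f) ?_ ?_ ?_
  · unfold avgCube
    rw [div_eq_inv_mul, div_eq_inv_mul] at *
    · simpa [smul_eq_mul, Finset.mul_sum] using h
  · intro i _; positivity
  · rw [Finset.sum_const, Finset.card_univ, card_cube]
    simp
  · intro i _; trivial


lemma cube_maximal {n : ℕ} {ι : Type*} (J : Finset ι) (hJ : J.Nonempty) (h2 : 2 ≤ J.card)
    (Y : ι → Fin n → ℝ) (σ : ℝ) (hσ : 0 < σ) (hY : ∀ j ∈ J, (∑ i, Y j i ^ 2) ≤ σ ^ 2) :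
    avgCube (fun s => J.sup' hJ (fun j => ∑ i, sg (s i) * Y j i))
      ≤ σ * Real.sqrt (2 * Real.log J.card) := by
  set L : ℝ := Real.log J.card with hLdef
  have hL : 0 < L := by
    apply Real.log_pos
    exact_mod_cast h2.trans_lt' (by norm_num)
  set t : ℝ := Real.sqrt (2 * L) / σ with htdef
  have hsq : Real.sqrt (2 * L) ^ 2 = 2 * L := Real.sq_sqrt (by positivity)
  have ht : 0 < t := by
    apply div_pos _ hσ
    exact Real.sqrt_pos.2 (by linarith)
  -- key bound on exp-moment of the sup
  have key : ∀ s : Fin n → Bool,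
      Real.exp (t * J.sup' hJ (fun j => ∑ i, sg (s i) * Y j i))
        ≤ ∑ j ∈ J, Real.exp (∑ i, t * sg (s i) * Y j i) := by
    intro s
    have hmul : t * J.sup' hJ (fun j => ∑ i, sg (s i) * Y j i)
        = J.sup' hJ (fun j => t * ∑ i, sg (s i) * Y j i) :=
      Finset.comp_sup'_eq_sup'_comp hJ (fun z => t * z)
        (fun a b => by show t * max a b = max (t * a) (t * b); rw [mul_max_of_nonneg _ _ ht.le])
    have hexp : Real.exp (J.sup' hJ (fun j => t * ∑ i, sg (s i) * Y j i))
        = J.sup' hJ (fun j => Real.exp (t * ∑ i, sg (s i) * Y j i)) :=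
      Finset.comp_sup'_eq_sup'_comp hJ Real.exp
        (fun a b => by
          show Real.exp (max a b) = max (Real.exp a) (Real.exp b)
          rcases le_total a b with h | h
          · rw [max_eq_right h, max_eq_right (Real.exp_le_exp.2 h)]
          · rw [max_eq_left h, max_eq_left (Real.exp_le_exp.2 h)])
    rw [hmul, hexp]
    apply Finset.sup'_le
    intro j hj
    have : t * ∑ i, sg (s i) * Y j i = ∑ i, t * sg (s i) * Y j i := by
      rw [Finset.mul_sum]; exact Finset.sum_congr rfl fun i _ => by ring
    rw [this]
    exact Finset.single_le_sum (f := fun j => Real.exp (∑ i, t * sg (s i) * Y j i))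
      (fun j _ => (Real.exp_pos _).le) hj
  -- expectation of exp of sup
  have hEexp : avgCube (fun s => Real.exp (t * J.sup' hJ (fun j => ∑ i, sg (s i) * Y j i)))
      ≤ J.card * Real.exp (t ^ 2 * σ ^ 2 / 2) := by
    unfold avgCube
    rw [div_le_iff₀ (by positivity)]
    calc (∑ s : Fin n → Bool, Real.exp (t * J.sup' hJ (fun j => ∑ i, sg (s i) * Y j i)))
        ≤ ∑ s : Fin n → Bool, ∑ j ∈ J, Real.exp (∑ i, t * sg (s i) * Y j i) :=
          Finset.sum_le_sum fun s _ => key s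
      _ = ∑ j ∈ J, ∑ s : Fin n → Bool, Real.exp (∑ i, t * sg (s i) * Y j i) :=
          Finset.sum_comm
      _ ≤ ∑ j ∈ J, (2:ℝ) ^ n * Real.exp (t ^ 2 * σ ^ 2 / 2) := by
          apply Finset.sum_le_sum
          intro j hj
          refine (cube_mgf (Y j) t).trans ?_
          have : t ^ 2 * (∑ i, Y j i ^ 2) / 2 ≤ t ^ 2 * σ ^ 2 / 2 := by
            have := hY j hj
            nlinarith [sq_nonneg t]
          have h2n : (0:ℝ) < 2 ^ n := by positivity
          nlinarith [Real.exp_le_exp.2 this, Real.exp_pos (t ^ 2 * (∑ i, Y j i ^ 2) / 2)]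
      _ = J.card * (2 ^ n * Real.exp (t ^ 2 * σ ^ 2 / 2)) := by
          rw [Finset.sum_const]; simp [mul_assoc]
      _ = J.card * Real.exp (t ^ 2 * σ ^ 2 / 2) * 2 ^ n := by ring
  -- Jensen
  have hJensen : t * avgCube (fun s => J.sup' hJ (fun j => ∑ i, sg (s i) * Y j i))
      ≤ L + t ^ 2 * σ ^ 2 / 2 := by
    have h1 : Real.exp (t * avgCube (fun s => J.sup' hJ (fun j => ∑ i, sg (s i) * Y j i)))
        ≤ J.card * Real.exp (t ^ 2 * σ ^ 2 / 2) := by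
      have heq : t * avgCube (fun s => J.sup' hJ (fun j => ∑ i, sg (s i) * Y j i))
          = avgCube (fun s => t * J.sup' hJ (fun j => ∑ i, sg (s i) * Y j i)) := by
        unfold avgCube
        rw [← mul_div_assoc, Finset.mul_sum]
      rw [heq]
      exact (cube_jensen_exp _).trans hEexp
    have hcard : (0:ℝ) < J.card := by exact_mod_cast Finset.card_pos.2 hJ
    calc t * avgCube (fun s => J.sup' hJ (fun j => ∑ i, sg (s i) * Y j i))
        = Real.log (Real.exp (t * avgCube (fun s => J.sup' hJ (fun j => ∑ i, sg (s i) * Y j i)))) := (Real.log_exp _).symm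
      _ ≤ Real.log (J.card * Real.exp (t ^ 2 * σ ^ 2 / 2)) :=
          Real.log_le_log (Real.exp_pos _) h1
      _ = L + t ^ 2 * σ ^ 2 / 2 := by
          rw [Real.log_mul (ne_of_gt hcard) (Real.exp_ne_zero _), Real.log_exp]
  -- conclude
  have ht2 : t ^ 2 = 2 * L / σ ^ 2 := by
    rw [htdef, div_pow, hsq]
  have hfinal : t * avgCube (fun s => J.sup' hJ (fun j => ∑ i, sg (s i) * Y j i)) ≤ 2 * L := by
    calc t * _ ≤ L + t ^ 2 * σ ^ 2 / 2 := hJensen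
      _ = 2 * L := by rw [ht2]; field_simp; ring
  have hle := (le_div_iff₀' ht).2 hfinal  -- avg ≤ 2L / t
  refine hle.trans (le_of_eq ?_)
  rw [htdef, div_div_eq_mul_div, mul_comm (2*L) σ, mul_div_assoc, Real.div_sqrt]

lemma cube_maximal_abs {n : ℕ} {ι : Type*} (P : Finset ι) (hP : P.Nonempty)
    (b : ι → Fin n → ℝ) (σ : ℝ) (hσ : 0 < σ) (hb : ∀ p ∈ P, (∑ i, b p i ^ 2) ≤ σ ^ 2) :
    avgCube (fun s => P.sup' hP (fun p => |∑ i, sg (s i) * b p i|))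
      ≤ σ * Real.sqrt (2 * Real.log (2 * P.card)) := by
  classical
  set J : Finset (ι × Bool) := P ×ˢ (Finset.univ : Finset Bool) with hJdef
  have hJne : J.Nonempty := hP.product ⟨true, Finset.mem_univ _⟩
  have hcardJ : J.card = P.card * 2 := by
    rw [hJdef, Finset.card_product]
    simp
  have h2 : 2 ≤ J.card := by
    rw [hcardJ]
    have := Finset.card_pos.2 hP
    omega
  set Y : ι × Bool → Fin n → ℝ := fun q i => sg q.2 * b q.1 i with hYdef
  have hY : ∀ q ∈ J, (∑ i, Y q i ^ 2) ≤ σ ^ 2 := by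
    intro q hq
    have hq1 : q.1 ∈ P := (Finset.mem_product.1 hq).1
    have : ∀ i : Fin n, Y q i ^ 2 = b q.1 i ^ 2 := by
      intro i
      rw [hYdef]
      simp only [mul_pow, sg_sq, one_mul]
    rw [Finset.sum_congr rfl fun i _ => this i]
    exact hb _ hq1
  have hmax := cube_maximal J hJne h2 Y σ hσ hY
  refine le_trans (avgCube_le ?_) (hmax.trans (le_of_eq ?_))
  · intro s
    apply Finset.sup'_le
    intro p hp
    have hplus : (∑ i, sg (s i) * b p i) ≤ J.sup' hJne (fun q => ∑ i, sg (s i) * Y q i) := by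
      have hmem : (p, true) ∈ J := Finset.mem_product.2 ⟨hp, Finset.mem_univ _⟩
      refine le_trans (le_of_eq ?_) (Finset.le_sup' (fun q => ∑ i, sg (s i) * Y q i) hmem)
      apply Finset.sum_congr rfl
      intro i _
      simp [hYdef, sg]
    have hminus : -(∑ i, sg (s i) * b p i) ≤ J.sup' hJne (fun q => ∑ i, sg (s i) * Y q i) := by
      have hmem : (p, false) ∈ J := Finset.mem_product.2 ⟨hp, Finset.mem_univ _⟩
      refine le_trans (le_of_eq ?_) (Finset.le_sup' (fun q => ∑ i, sg (s i) * Y q i) hmem)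
      rw [← Finset.sum_neg_distrib]
      apply Finset.sum_congr rfl
      intro i _
      simp [hYdef, sg]
    exact abs_le.2 ⟨by linarith, hplus⟩
  · congr 2
    rw [hcardJ]
    push_cast
    ring


lemma abs_sg (b : Bool) : |sg b| = 1 := by cases b <;> simp [sg]

noncomputable def vert (l : ℕ) (M : ℝ) : Option (Fin l × Bool) → Fin l → ℝ
  | none => fun _ => 0
  | some (j, b) => fun j' => if j' = j then sg b * M else 0

lemma vert_l1 {l : ℕ} {M : ℝ} (hM : 0 ≤ M) (v : Option (Fin l × Bool)) :
    (∑ j, |vert l M v j|) ≤ M := by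
  match v with
  | none => simp [vert, hM]
  | some (j, b) =>
      simp only [vert]
      rw [Finset.sum_eq_single j]
      · simp [abs_mul, abs_sg, abs_of_nonneg hM]
      · intro j' _ hj'
        simp [hj']
      · intro h
        exact absurd (Finset.mem_univ j) h

lemma vert_sq {l : ℕ} {M : ℝ} (hM : 0 ≤ M) (v : Option (Fin l × Bool)) :
    (∑ j, (vert l M v j) ^ 2) ≤ M ^ 2 := by
  match v with
  | none => simp [vert]; positivity
  | some (j, b) =>
      simp only [vert]
      rw [Finset.sum_eq_single j]
      · simp [mul_pow, sg_sq]
      · intro j' _ hj'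
        simp [hj']
      · intro h
        exact absurd (Finset.mem_univ j) h

noncomputable def netF (l : ℕ) (M : ℝ) (m : ℕ) : Finset (Fin l → ℝ) :=
  Finset.image (fun v : Fin m → Option (Fin l × Bool) => fun j => (∑ t, vert l M (v t) j) / m)
    Finset.univ

lemma netF_nonempty (l : ℕ) (M : ℝ) (m : ℕ) : (netF l M m).Nonempty :=
  ⟨_, Finset.mem_image.2 ⟨fun _ => none, Finset.mem_univ _, rfl⟩⟩

lemma card_netF (l : ℕ) (M : ℝ) (m : ℕ) : (netF l M m).card ≤ (2 * l + 1) ^ m := by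
  refine Finset.card_image_le.trans ?_
  rw [Finset.card_univ]
  rw [Fintype.card_fun]
  simp [Fintype.card_option, Fintype.card_prod, Nat.mul_comm]

lemma netF_l1 {l : ℕ} {M : ℝ} (hM : 0 ≤ M) {m : ℕ} (hm : 0 < m) {c : Fin l → ℝ}
    (hc : c ∈ netF l M m) : (∑ j, |c j|) ≤ M := by
  obtain ⟨v, -, rfl⟩ := Finset.mem_image.1 hc
  have hmr : (0:ℝ) < m := by exact_mod_cast hm
  calc (∑ j, |(∑ t, vert l M (v t) j) / (m:ℝ)|)
      = (∑ j, |∑ t, vert l M (v t) j|) / m := by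
        rw [Finset.sum_div]
        exact Finset.sum_congr rfl fun j _ => by
          rw [abs_div, abs_of_pos hmr]
    _ ≤ (∑ j, ∑ t, |vert l M (v t) j|) / m := by
        gcongr with j _
        exact Finset.abs_sum_le_sum_abs _ _
    _ = (∑ t, ∑ j, |vert l M (v t) j|) / m := by rw [Finset.sum_comm]
    _ ≤ (∑ t : Fin m, M) / m := by
        gcongr with t _
        exact vert_l1 hM (v t)
    _ = M := by
        rw [Finset.sum_const]
        simp
        field_simp

lemma sum_sq_le_sq_l1 {l : ℕ} (θ : Fin l → ℝ) :
    (∑ j, θ j ^ 2) ≤ (∑ j, |θ j|) ^ 2 := by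
  have h : ∀ j : Fin l, θ j ^ 2 = |θ j| ^ 2 := fun j => (sq_abs _).symm
  rw [Finset.sum_congr rfl fun j _ => h j]
  exact Finset.sum_sq_le_sq_sum_of_nonneg fun j _ => abs_nonneg _

/-- Frank–Wolfe / Maurey approximate Caratheodory over the `ℓ¹` ball. -/
lemma maurey {l : ℕ} (hl : 0 < l) {M : ℝ} (hM : 0 < M) (m : ℕ) (hm : 0 < m)
    (θ : Fin l → ℝ) (hθ : (∑ j, |θ j|) ≤ M) :
    ∃ c ∈ netF l M m, (∑ j, (θ j - c j) ^ 2) ≤ 4 * M ^ 2 / m := by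
  induction m with
  | zero => exact absurd hm (by omega)
  | succ m ih =>
    rcases Nat.eq_zero_or_pos m with hm0 | hmpos
    · -- base case m+1 = 1
      subst hm0
      refine ⟨_, Finset.mem_image.2 ⟨fun _ => none, Finset.mem_univ _, rfl⟩, ?_⟩
      simp only [vert, Finset.sum_const, zero_div, sub_zero, Nat.cast_one, div_one,
        Finset.card_univ, smul_zero, Nat.zero_add]
      calc (∑ j, θ j ^ 2) ≤ (∑ j, |θ j|) ^ 2 := sum_sq_le_sq_l1 θ
        _ ≤ M ^ 2 := by nlinarith [Finset.sum_nonneg (fun j (_ : j ∈ Finset.univ) => abs_nonneg (θ j))]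
        _ ≤ 4 * M ^ 2 := by nlinarith
    · -- inductive step
      obtain ⟨c, hcmem, hc⟩ := ih hmpos
      obtain ⟨v, -, rfl⟩ := Finset.mem_image.1 hcmem
      set c : Fin l → ℝ := fun j => (∑ t, vert l M (v t) j) / m with hcdef
      set w : Fin l → ℝ := fun j => θ j - c j with hwdef
      -- find a good vertex
      obtain ⟨j0, -, hj0⟩ := Finset.exists_max_image Finset.univ (fun j => |w j|)
        (Finset.univ_nonempty_iff.2 (Fin.pos_iff_nonempty.1 hl))
      set u : Option (Fin l × Bool) := some (j0, decide (0 ≤ w j0)) with hudef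
      have hvertu : ∑ j, w j * vert l M u j = |w j0| * M := by
        rw [hudef]
        simp only [vert]
        rw [Finset.sum_eq_single j0]
        · rcases le_or_gt 0 (w j0) with h | h
          · simp [h, sg, abs_of_nonneg h]
          · simp [not_le.2 h, sg, abs_of_neg h]
        · intro j' _ hj'
          simp [hj']
        · intro h
          exact absurd (Finset.mem_univ j0) h
      have hgood : ∑ j, w j * (θ j - vert l M u j) ≤ 0 := by
        have h1 : ∑ j, w j * θ j ≤ |w j0| * M := by
          calc ∑ j, w j * θ j ≤ ∑ j, |w j| * |θ j| := by
                apply Finset.sum_le_sum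
                intro j _
                calc w j * θ j ≤ |w j * θ j| := le_abs_self _
                  _ = |w j| * |θ j| := abs_mul _ _
            _ ≤ ∑ j, |w j0| * |θ j| := by
                apply Finset.sum_le_sum
                intro j _
                exact mul_le_mul_of_nonneg_right (hj0 j (Finset.mem_univ j)) (abs_nonneg _)
            _ = |w j0| * ∑ j, |θ j| := by rw [Finset.mul_sum]
            _ ≤ |w j0| * M := mul_le_mul_of_nonneg_left hθ (abs_nonneg _)
        have h2 : ∑ j, w j * (θ j - vert l M u j)
            = (∑ j, w j * θ j) - ∑ j, w j * vert l M u j := by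
          rw [← Finset.sum_sub_distrib]
          exact Finset.sum_congr rfl fun j _ => by ring
        rw [h2, hvertu]
        linarith
      -- the new net point
      set v' : Fin (m + 1) → Option (Fin l × Bool) := Fin.snoc v u with hv'def
      set c' : Fin l → ℝ := fun j => (∑ t, vert l M (v' t) j) / (m + 1 : ℕ) with hc'def
      refine ⟨c', Finset.mem_image.2 ⟨v', Finset.mem_univ _, rfl⟩, ?_⟩
      have hmr : (0:ℝ) < m := by exact_mod_cast hmpos
      have hc'eq : ∀ j, θ j - c' j = ((m:ℝ) * w j + (θ j - vert l M u j)) / (m + 1) := by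
        intro j
        simp only [hc'def]
        have hsum : (∑ t : Fin (m+1), vert l M (v' t) j)
            = (∑ t : Fin m, vert l M (v t) j) + vert l M u j := by
          rw [hv'def, Fin.sum_univ_castSucc]
          simp [Fin.snoc]
        have hcm : (∑ t : Fin m, vert l M (v t) j) = (m:ℝ) * c j := by
          rw [hcdef]
          field_simp
        rw [hsum, hcm]
        rw [hwdef]
        push_cast
        field_simp
        ring
      have hnum : (∑ j, ((m:ℝ) * w j + (θ j - vert l M u j)) ^ 2)
          = (m:ℝ)^2 * (∑ j, w j ^ 2) + 2 * m * (∑ j, w j * (θ j - vert l M u j))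
              + (∑ j, (θ j - vert l M u j) ^ 2) := by
        rw [Finset.mul_sum, Finset.mul_sum, ← Finset.sum_add_distrib, ← Finset.sum_add_distrib]
        exact Finset.sum_congr rfl fun j _ => by ring
      have hexp : (∑ j, (θ j - c' j) ^ 2)
          = ((m:ℝ)^2 * (∑ j, w j ^ 2) + 2 * m * (∑ j, w j * (θ j - vert l M u j))
              + (∑ j, (θ j - vert l M u j) ^ 2)) / ((m:ℝ)+1)^2 := by
        calc (∑ j, (θ j - c' j) ^ 2)
            = ∑ j, (((m:ℝ) * w j + (θ j - vert l M u j)) / ((m:ℝ)+1)) ^ 2 :=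
              Finset.sum_congr rfl fun j _ => by rw [hc'eq j]
          _ = _ := by
              simp only [div_pow]
              rw [← Finset.sum_div, hnum]
      have hdsq : (∑ j, (θ j - vert l M u j) ^ 2) ≤ 4 * M ^ 2 := by
        have h1 : ∀ j : Fin l, (θ j - vert l M u j) ^ 2 ≤ 2 * θ j ^ 2 + 2 * vert l M u j ^ 2 :=
          fun j => by nlinarith [sq_nonneg (θ j + vert l M u j)]
        calc (∑ j, (θ j - vert l M u j) ^ 2)
            ≤ ∑ j, (2 * θ j ^ 2 + 2 * vert l M u j ^ 2) := Finset.sum_le_sum fun j _ => h1 j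
          _ = 2 * (∑ j, θ j ^ 2) + 2 * (∑ j, vert l M u j ^ 2) := by
              rw [Finset.sum_add_distrib, Finset.mul_sum, Finset.mul_sum]
          _ ≤ 2 * M ^ 2 + 2 * M ^ 2 := by
              have ha := (sum_sq_le_sq_l1 θ).trans (by nlinarith [Finset.sum_nonneg (fun j (_ : j ∈ Finset.univ) => abs_nonneg (θ j))] : (∑ j, |θ j|) ^ 2 ≤ M ^ 2)
              have hb := vert_sq hM.le u
              nlinarith
          _ = 4 * M ^ 2 := by ring
      rw [hexp]
      rw [div_le_div_iff₀ (by positivity) (by positivity)]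
      have hwsum : (∑ j, w j ^ 2) ≤ 4 * M ^ 2 / m := hc
      have hws : (m:ℝ)^2 * (∑ j, w j ^ 2) ≤ 4 * M ^ 2 * m := by
        rw [le_div_iff₀ hmr] at hwsum
        nlinarith [hwsum, hmr]
      push_cast
      nlinarith [hgood, hdsq, hws, hmr, mul_nonneg hmr.le (neg_nonneg.2 hgood)]


lemma integral_eq_avgCube {n : ℕ} {Ω : Type*} [mΩ : MeasurableSpace Ω] (μ : Measure Ω)
    [IsProbabilityMeasure μ] (ε : Fin n → Ω → ℝ) (hmeas : ∀ i, Measurable (ε i))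
    (hdist : ∀ i, μ {ω | ε i ω = 1} = ENNReal.ofReal (1/2) ∧
      μ {ω | ε i ω = -1} = ENNReal.ofReal (1/2))
    (hind : iIndepFun ε μ) (G : (Fin n → ℝ) → ℝ) :
    ∫ ω, G (fun i => ε i ω) ∂μ = avgCube (fun s => G (fun i => sg (s i))) := by
  classical
  set A : (Fin n → Bool) → Set Ω := fun s => ⋂ i, ε i ⁻¹' {sg (s i)} with hAdef
  have hAmeas : ∀ s, MeasurableSet (A s) :=
    fun s => MeasurableSet.iInter fun i => (hmeas i) (measurableSet_singleton _)
  have hμone : ∀ (i : Fin n) (c : Bool), μ (ε i ⁻¹' {sg c}) = ENNReal.ofReal (1/2) := by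
    intro i c
    cases c
    · have : ε i ⁻¹' {sg false} = {ω | ε i ω = -1} := by
        ext ω; simp [sg]
      rw [this]; exact (hdist i).2
    · have : ε i ⁻¹' {sg true} = {ω | ε i ω = 1} := by
        ext ω; simp [sg]
      rw [this]; exact (hdist i).1
  have hμA : ∀ s, μ (A s) = ENNReal.ofReal (1/2) ^ n := by
    intro s
    rw [hAdef]
    rw [hind.meas_iInter (fun i => ⟨{sg (s i)}, measurableSet_singleton _, rfl⟩)]
    rw [Finset.prod_congr rfl fun i _ => hμone i (s i)]
    simp
  have hdisj : ∀ s s' : Fin n → Bool, s ≠ s' → Disjoint (A s) (A s') := by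
    intro s s' hne
    obtain ⟨i, hi⟩ : ∃ i, s i ≠ s' i := by
      by_contra h
      push_neg at h
      exact hne (funext h)
    apply Set.disjoint_left.2
    intro ω hω hω'
    have h1 : ε i ω = sg (s i) := by
      have := Set.mem_iInter.1 hω i; simpa using this
    have h2 : ε i ω = sg (s' i) := by
      have := Set.mem_iInter.1 hω' i; simpa using this
    have heq : sg (s i) = sg (s' i) := h1 ▸ h2
    revert hi heq
    cases s i <;> cases s' i <;> simp [sg] <;> norm_num
  have hcover : μ (⋃ s : Fin n → Bool, A s)ᶜ = 0 := by
    have hU : μ (⋃ s : Fin n → Bool, A s) = 1 := by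
      rw [measure_iUnion ?_ (fun s => hAmeas s)]
      · rw [tsum_fintype]
        rw [Finset.sum_congr rfl fun s _ => hμA s]
        rw [Finset.sum_const, Finset.card_univ, card_cube]
        rw [← ENNReal.ofReal_pow (by norm_num)]
        rw [nsmul_eq_mul]
        rw [← ENNReal.ofReal_natCast, ← ENNReal.ofReal_mul (by positivity)]
        have : ((2 ^ n : ℕ) : ℝ) * (1 / 2 : ℝ) ^ n = 1 := by
          push_cast
          rw [← mul_pow]
          norm_num
        rw [this, ENNReal.ofReal_one]
      · intro s s' hne
        exact hdisj s s' hne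
    rw [measure_compl (MeasurableSet.iUnion fun s => hAmeas s) (by simp), hU]
    simp
  -- the simple function
  set F : Ω → ℝ := fun ω => ∑ s : Fin n → Bool,
    Set.indicator (A s) (fun _ => G (fun i => sg (s i))) ω with hFdef
  have hae : (fun ω => G (fun i => ε i ω)) =ᵐ[μ] F := by
    rw [Filter.eventuallyEq_iff_exists_mem]
    refine ⟨⋃ s : Fin n → Bool, A s, ?_, ?_⟩
    · rw [mem_ae_iff]
      exact hcover
    · intro ω hω
      obtain ⟨s, hs⟩ := Set.mem_iUnion.1 hω
      have hεω : (fun i => ε i ω) = fun i => sg (s i) := by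
        funext i
        have := Set.mem_iInter.1 hs i
        simpa using this
      rw [hFdef]
      show G (fun i => ε i ω) = ∑ s' : Fin n → Bool, _
      rw [Finset.sum_eq_single s]
      · rw [Set.indicator_of_mem hs, hεω]
      · intro s' _ hne
        apply Set.indicator_of_notMem
        exact fun hmem => (Set.disjoint_left.1 (hdisj s' s hne)) hmem hs
      · intro h
        exact absurd (Finset.mem_univ s) h
  rw [integral_congr_ae hae, hFdef]
  rw [integral_finset_sum _ (fun s _ =>
    (integrable_const (G (fun i => sg (s i)))).indicator (hAmeas s))]
  have : ∀ s : Fin n → Bool, ∫ ω, Set.indicator (A s) (fun _ => G (fun i => sg (s i))) ω ∂μ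
      = (1/2 : ℝ) ^ n * G (fun i => sg (s i)) := by
    intro s
    rw [integral_indicator_const _ (hAmeas s), measureReal_def, hμA s]
    rw [smul_eq_mul]
    congr 1
    rw [← ENNReal.ofReal_pow (by norm_num), ENNReal.toReal_ofReal (by positivity)]
  rw [Finset.sum_congr rfl fun s _ => this s]
  rw [← Finset.mul_sum]
  unfold avgCube
  have h2 : ((1:ℝ)/2) ^ n * (2:ℝ) ^ n = 1 := by rw [← mul_pow]; norm_num
  rw [eq_div_iff (by positivity : ((2:ℝ)^n) ≠ 0), mul_right_comm, h2, one_mul]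

lemma sum_sq_sub_le {l : ℕ} (u v w : Fin l → ℝ) :
    (∑ j, (u j - v j) ^ 2) ≤ 2 * (∑ j, (w j - u j) ^ 2) + 2 * (∑ j, (w j - v j) ^ 2) := by
  rw [Finset.mul_sum, Finset.mul_sum, ← Finset.sum_add_distrib]
  apply Finset.sum_le_sum
  intro j _
  nlinarith [sq_nonneg (w j - u j + (w j - v j)), sq_nonneg ((w j - u j) - (w j - v j))]

lemma pow_two_sq (k : ℕ) : ((2:ℝ) ^ k) ^ 2 = 4 ^ k := by
  rw [← pow_mul, mul_comm, pow_mul]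
  norm_num

lemma abs_le_of_sq_le_sq'' {a b : ℝ} (h : a ^ 2 ≤ b ^ 2) (hb : 0 ≤ b) : |a| ≤ b := by
  nlinarith [sq_abs a, abs_nonneg a]

end RadAux
set_option maxHeartbeats 1000000 in
/-- Theorem 1.1 (general contraction case): there is a universal constant `K > 0` such
that for all `n, l ≥ 1`, `M > 0`, any covariable space `𝔛`, covariables `x`, any family
of functions `φ_θ`, any i.i.d. Rademacher sequence `ε`, and any `A ≥ 0` with
`d(θ,θ') ≤ √n · A · ‖θ - θ'‖₂` on `Θ = {θ : ‖θ‖₁ ≤ M}`, one has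
`E sup_{θ∈Θ} |X_θ| ≤ E|X_{θ₀}| + K √(n log(l+1)) log(n+1) A M`. -/
theorem rademacher_entropy_bound_contraction :
    ∃ K : ℝ, 0 < K ∧
      ∀ (n l : ℕ), 0 < n → 0 < l →
      ∀ (M : ℝ), 0 < M →
      ∀ (𝔛 : Type) (x : Fin n → 𝔛) (φ : (Fin l → ℝ) → 𝔛 → ℝ)
        (Ω : Type) (mΩ : MeasurableSpace Ω) (μ : Measure Ω), IsProbabilityMeasure μ →
      ∀ (ε : Fin n → Ω → ℝ),
        (∀ i, Measurable (ε i)) →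
        (∀ i, μ {ω | ε i ω = 1} = ENNReal.ofReal (1/2) ∧
              μ {ω | ε i ω = -1} = ENNReal.ofReal (1/2)) →
        iIndepFun ε μ →
      ∀ (A : ℝ), 0 ≤ A →
        -- contraction property of the family `φ` w.r.t. the empirical pseudometric `d`
        (∀ θ θ' : Fin l → ℝ, (∑ j, |θ j|) ≤ M → (∑ j, |θ' j|) ≤ M →
          Real.sqrt (∑ i, (φ θ (x i) - φ θ' (x i))^2)
            ≤ Real.sqrt n * A * Real.sqrt (∑ j, (θ j - θ' j)^2)) →
      ∀ (θ₀ : Fin l → ℝ), (∑ j, |θ₀ j|) ≤ M →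
        (∫ ω, (⨆ θ : {θ : Fin l → ℝ // (∑ j, |θ j|) ≤ M},
            |∑ i, ε i ω * φ θ.1 (x i)|) ∂μ)
          ≤ (∫ ω, |∑ i, ε i ω * φ θ₀ (x i)| ∂μ)
            + K * Real.sqrt (n * Real.log (l + 1)) * Real.log (n + 1) * A * M := by
  classical
  refine ⟨1000, by norm_num, ?_⟩
  intro n l hn hl M hM 𝔛 x φ Ω mΩ μ hμ ε hmeas hdist hind A hA hcontr θ₀ hθ₀
  haveI := hμ
  haveI hne : Nonempty {θ : Fin l → ℝ // (∑ j, |θ j|) ≤ M} :=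
    ⟨⟨0, by simp [hM.le]⟩⟩
  set X : (Fin l → ℝ) → (Fin n → Bool) → ℝ :=
    fun θ s => ∑ i, RadAux.sg (s i) * φ θ (x i) with hXdef
  -- reduce both integrals to cube averages
  have hLHS : (∫ ω, (⨆ θ : {θ : Fin l → ℝ // (∑ j, |θ j|) ≤ M},
        |∑ i, ε i ω * φ θ.1 (x i)|) ∂μ)
      = RadAux.avgCube (fun s => ⨆ θ : {θ : Fin l → ℝ // (∑ j, |θ j|) ≤ M}, |X θ.1 s|) :=
    RadAux.integral_eq_avgCube μ ε hmeas hdist hind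
      (fun e => ⨆ θ : {θ : Fin l → ℝ // (∑ j, |θ j|) ≤ M}, |∑ i, e i * φ θ.1 (x i)|)
  have hRHS : (∫ ω, |∑ i, ε i ω * φ θ₀ (x i)| ∂μ)
      = RadAux.avgCube (fun s => |X θ₀ s|) :=
    RadAux.integral_eq_avgCube μ ε hmeas hdist hind
      (fun e => |∑ i, e i * φ θ₀ (x i)|)
  rw [hLHS, hRHS]
  -- nonnegativity facts
  have hlogn1 : Real.log 2 ≤ Real.log (n + 1) := by
    apply Real.log_le_log (by norm_num)
    have : (1:ℝ) ≤ n := by exact_mod_cast hn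
    linarith
  have hlog2 : (0.6931471803 : ℝ) < Real.log 2 := Real.log_two_gt_d9
  have hlogn : 0 ≤ Real.log (n + 1) := by linarith
  have hsqrtn : 0 ≤ Real.sqrt (n * Real.log (l + 1)) := Real.sqrt_nonneg _
  -- squared contraction
  have hC2 : ∀ θ θ' : Fin l → ℝ, (∑ j, |θ j|) ≤ M → (∑ j, |θ' j|) ≤ M →
      (∑ i, (φ θ (x i) - φ θ' (x i)) ^ 2) ≤ n * A ^ 2 * (∑ j, (θ j - θ' j) ^ 2) := by
    intro θ θ' h1 h2
    have h := hcontr θ θ' h1 h2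
    have hS : (0:ℝ) ≤ ∑ i, (φ θ (x i) - φ θ' (x i)) ^ 2 :=
      Finset.sum_nonneg fun i _ => sq_nonneg _
    have hT : (0:ℝ) ≤ ∑ j, (θ j - θ' j) ^ 2 :=
      Finset.sum_nonneg fun j _ => sq_nonneg _
    have h3 : (Real.sqrt (∑ i, (φ θ (x i) - φ θ' (x i)) ^ 2)) ^ 2
        ≤ (Real.sqrt n * A * Real.sqrt (∑ j, (θ j - θ' j) ^ 2)) ^ 2 := by
      apply pow_le_pow_left₀ (Real.sqrt_nonneg _) h
    rw [Real.sq_sqrt hS] at h3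
    refine h3.trans (le_of_eq ?_)
    rw [mul_pow, mul_pow, Real.sq_sqrt hT, Real.sq_sqrt (by positivity : (0:ℝ) ≤ (n:ℝ))]
  rcases hA.eq_or_lt with hA0 | hApos
  · -- degenerate case A = 0
    have hconst : ∀ θ : {θ : Fin l → ℝ // (∑ j, |θ j|) ≤ M}, ∀ s, X θ.1 s = X θ₀ s := by
      intro θ s
      apply Finset.sum_congr rfl
      intro i _
      have hle := hC2 θ.1 θ₀ θ.2 hθ₀
      rw [← hA0] at hle
      simp only [ne_eq, OfNat.ofNat_ne_zero, not_false_eq_true, zero_pow, mul_zero,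
        zero_mul] at hle
      have hzero : ∀ i' ∈ Finset.univ, (φ θ.1 (x i') - φ θ₀ (x i')) ^ 2 = 0 := by
        have := (Finset.sum_eq_zero_iff_of_nonneg (fun i' _ => sq_nonneg _)).1
          (le_antisymm hle (Finset.sum_nonneg fun i' _ => sq_nonneg _))
        exact this
      have := hzero i (Finset.mem_univ i)
      have : φ θ.1 (x i) = φ θ₀ (x i) := by
        have h := pow_eq_zero_iff (n := 2) (by norm_num) |>.1 this
        linarith [sub_eq_zero.1 h]
      rw [this]
    have heq : (fun s => ⨆ θ : {θ : Fin l → ℝ // (∑ j, |θ j|) ≤ M}, |X θ.1 s|)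
        = fun s => |X θ₀ s| := by
      funext s
      have : (fun θ : {θ : Fin l → ℝ // (∑ j, |θ j|) ≤ M} => |X θ.1 s|)
          = fun _ => |X θ₀ s| := funext fun θ => by rw [hconst θ s]
      rw [this, ciSup_const]
    rw [heq]
    have : 0 ≤ 1000 * Real.sqrt (n * Real.log (l + 1)) * Real.log (n + 1) * A * M := by
      have := mul_nonneg (mul_nonneg (mul_nonneg (by norm_num : (0:ℝ) ≤ 1000) hsqrtn) hlogn) hA
      exact mul_nonneg this hM.le
    linarith
  · -- main case A > 0
    have hnR : (0:ℝ) < n := by exact_mod_cast hn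
    -- number of levels
    set K0 : ℕ := Nat.log 2 n + 1 with hK0def
    set KK : ℕ := K0 + 1 with hKKdef
    have h2K0 : (n:ℝ) ≤ 2 ^ K0 := by
      have h := Nat.lt_pow_succ_log_self (by norm_num : 1 < 2) n
      rw [hK0def]
      exact_mod_cast h.le
    -- radii
    set rad : ℕ → ℝ := fun k => 4 * M / 2 ^ k with hraddef
    have hradpos : ∀ k, 0 < rad k := fun k => by rw [hraddef]; positivity
    have hradsucc : ∀ k, rad k = 2 * rad (k + 1) := by
      intro k
      rw [hraddef]
      simp only
      rw [pow_succ]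
      field_simp
    -- nets
    set NN : ℕ → Finset (Fin l → ℝ) := fun k =>
      if k = 0 then {θ₀} else RadAux.netF l M (4 ^ (k - 1)) with hNNdef
    have hNN0 : NN 0 = {θ₀} := by simp [hNNdef]
    have hNNsucc : ∀ k : ℕ, NN (k + 1) = RadAux.netF l M (4 ^ k) := by
      intro k
      rw [hNNdef]
      simp
    have hNNl1 : ∀ k, ∀ c ∈ NN k, (∑ j, |c j|) ≤ M := by
      intro k c hc
      match k with
      | 0 =>
        rw [hNN0, Finset.mem_singleton] at hc
        rw [hc]; exact hθ₀
      | (k' + 1) =>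
        rw [hNNsucc] at hc
        exact RadAux.netF_l1 hM.le (by positivity) hc
    have hNNcard : ∀ k, (NN k).card ≤ (2 * l + 1) ^ (4 ^ k) := by
      intro k
      match k with
      | 0 =>
        rw [hNN0, Finset.card_singleton]
        exact Nat.one_le_pow _ _ (by omega)
      | (k' + 1) =>
        rw [hNNsucc]
        refine (RadAux.card_netF l M (4 ^ k')).trans ?_
        exact Nat.pow_le_pow_right (by omega) (Nat.pow_le_pow_right (by norm_num) (by omega))
    -- covering property
    have hcover : ∀ (k : ℕ) (θ : Fin l → ℝ), (∑ j, |θ j|) ≤ M →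
        ∃ c, c ∈ NN k ∧ (∑ j, (θ j - c j) ^ 2) ≤ rad k ^ 2 := by
      intro k θ hθ
      match k with
      | 0 =>
        refine ⟨θ₀, by rw [hNN0]; exact Finset.mem_singleton_self _, ?_⟩
        have h2 : (∑ j, (θ j - θ₀ j) ^ 2) ≤ 2 * (∑ j, θ j ^ 2) + 2 * (∑ j, θ₀ j ^ 2) := by
          rw [Finset.mul_sum, Finset.mul_sum, ← Finset.sum_add_distrib]
          exact Finset.sum_le_sum fun j _ => by nlinarith [sq_nonneg (θ j + θ₀ j)]
        have h3 := RadAux.sum_sq_le_sq_l1 θ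
        have h4 := RadAux.sum_sq_le_sq_l1 θ₀
        have hth : 0 ≤ ∑ j, |θ j| := Finset.sum_nonneg fun j _ => abs_nonneg _
        have hth0 : 0 ≤ ∑ j, |θ₀ j| := Finset.sum_nonneg fun j _ => abs_nonneg _
        have hr0 : rad 0 ^ 2 = 16 * M ^ 2 := by rw [hraddef]; norm_num; ring
        nlinarith
      | (k' + 1) =>
        obtain ⟨c, hc1, hc2⟩ := RadAux.maurey hl hM (4 ^ k') (by positivity) θ hθ
        refine ⟨c, by rw [hNNsucc]; exact hc1, ?_⟩
        refine hc2.trans (le_of_eq ?_)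
        rw [hraddef]
        simp only
        rw [div_pow, RadAux.pow_two_sq, pow_succ]
        have h4 : (0:ℝ) < 4 ^ k' := by positivity
        field_simp
        push_cast
        ring
    -- pairs at each level
    set Pk : ℕ → Finset ((Fin l → ℝ) × (Fin l → ℝ)) := fun k =>
      (NN (k + 1) ×ˢ NN k).filter
        (fun p => (∑ j, (p.1 j - p.2 j) ^ 2) ≤ 10 * rad (k + 1) ^ 2) with hPkdef
    have hPkne : ∀ k, (Pk k).Nonempty := by
      intro k
      obtain ⟨c1, hc1m, hc1⟩ := hcover (k + 1) θ₀ hθ₀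
      obtain ⟨c2, hc2m, hc2⟩ := hcover k θ₀ hθ₀
      refine ⟨(c1, c2), ?_⟩
      rw [hPkdef]
      simp only [Finset.mem_filter, Finset.mem_product]
      refine ⟨⟨hc1m, hc2m⟩, ?_⟩
      have hs := RadAux.sum_sq_sub_le c1 c2 θ₀
      have hr := hradsucc k
      nlinarith [hradpos (k + 1)]
    -- the level maxima
    set MX : ℕ → (Fin n → Bool) → ℝ := fun k s =>
      (Pk k).sup' (hPkne k)
        (fun p => |∑ i, RadAux.sg (s i) * (φ p.1 (x i) - φ p.2 (x i))|) with hMXdef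
    -- pointwise chaining bound
    have hpoint : ∀ s : Fin n → Bool,
        (⨆ θ : {θ : Fin l → ℝ // (∑ j, |θ j|) ≤ M}, |X θ.1 s|)
          ≤ |X θ₀ s| + ((∑ k ∈ Finset.range KK, MX k s) + 2 * A * M) := by
      intro s
      apply ciSup_le
      intro θ
      have hch : ∀ k : ℕ, ∃ cc, cc ∈ NN k ∧ (∑ j, (θ.1 j - cc j) ^ 2) ≤ rad k ^ 2 :=
        fun k => hcover k θ.1 θ.2
      choose c hcm hcd using hch
      have hc0 : c 0 = θ₀ := by
        have := hcm 0
        rw [hNN0, Finset.mem_singleton] at this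
        exact this
      have hcl1 : ∀ k, (∑ j, |c k j|) ≤ M := fun k => hNNl1 k (c k) (hcm k)
      have htel : X θ.1 s = X θ₀ s + ((∑ k ∈ Finset.range KK, (X (c (k + 1)) s - X (c k) s))
          + (X θ.1 s - X (c KK) s)) := by
        rw [Finset.sum_range_sub (fun k => X (c k) s), hc0]
        ring
      have hinc : ∀ k, |X (c (k + 1)) s - X (c k) s| ≤ MX k s := by
        intro k
        have hXd : X (c (k + 1)) s - X (c k) s
            = ∑ i, RadAux.sg (s i) * (φ (c (k + 1)) (x i) - φ (c k) (x i)) := by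
          rw [hXdef]
          simp only
          rw [← Finset.sum_sub_distrib]
          exact Finset.sum_congr rfl fun i _ => by ring
        have hmem : (c (k + 1), c k) ∈ Pk k := by
          rw [hPkdef]
          simp only [Finset.mem_filter, Finset.mem_product]
          refine ⟨⟨hcm (k + 1), hcm k⟩, ?_⟩
          have hs2 := RadAux.sum_sq_sub_le (c (k + 1)) (c k) θ.1
          have hr := hradsucc k
          nlinarith [hcd (k + 1), hcd k, hradpos (k + 1)]
        rw [hXd, hMXdef]
        exact Finset.le_sup'
          (fun p => |∑ i, RadAux.sg (s i) * (φ p.1 (x i) - φ p.2 (x i))|) hmem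
      have htail : |X θ.1 s - X (c KK) s| ≤ 2 * A * M := by
        have hXd : X θ.1 s - X (c KK) s
            = ∑ i, RadAux.sg (s i) * (φ θ.1 (x i) - φ (c KK) (x i)) := by
          rw [hXdef]
          simp only
          rw [← Finset.sum_sub_distrib]
          exact Finset.sum_congr rfl fun i _ => by ring
        have hCS : (X θ.1 s - X (c KK) s) ^ 2
            ≤ (∑ i, RadAux.sg (s i) ^ 2) * (∑ i, (φ θ.1 (x i) - φ (c KK) (x i)) ^ 2) := by
          rw [hXd]
          exact Finset.sum_mul_sq_le_sq_mul_sq Finset.univ _ _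
        have hsg : (∑ i : Fin n, RadAux.sg (s i) ^ 2) = n := by
          rw [Finset.sum_congr rfl fun i _ => RadAux.sg_sq (s i)]
          simp
        have hd2 := hC2 θ.1 (c KK) θ.2 (hcl1 KK)
        have hdd := hcd KK
        have hY2 : (X θ.1 s - X (c KK) s) ^ 2 ≤ ((n:ℝ) * A * rad KK) ^ 2 := by
          rw [hsg] at hCS
          have hAsq : 0 ≤ A ^ 2 := sq_nonneg A
          calc (X θ.1 s - X (c KK) s) ^ 2
              ≤ (n:ℝ) * (∑ i, (φ θ.1 (x i) - φ (c KK) (x i)) ^ 2) := hCS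
            _ ≤ (n:ℝ) * ((n:ℝ) * A ^ 2 * (∑ j, (θ.1 j - c KK j) ^ 2)) := by
                apply mul_le_mul_of_nonneg_left hd2 hnR.le
            _ ≤ (n:ℝ) * ((n:ℝ) * A ^ 2 * rad KK ^ 2) := by
                apply mul_le_mul_of_nonneg_left _ hnR.le
                apply mul_le_mul_of_nonneg_left hdd (by positivity)
            _ = ((n:ℝ) * A * rad KK) ^ 2 := by ring
        have hnA : (0:ℝ) ≤ (n:ℝ) * A * rad KK := by
          have := hradpos KK
          positivity
        have hYle : |X θ.1 s - X (c KK) s| ≤ (n:ℝ) * A * rad KK :=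
          RadAux.abs_le_of_sq_le_sq'' hY2 hnA
        refine hYle.trans ?_
        rw [hraddef]
        simp only
        rw [hKKdef, pow_succ]
        have h2p : (0:ℝ) < 2 ^ K0 := by positivity
        have heq : (n:ℝ) * A * (4 * M / ((2:ℝ) ^ K0 * 2))
            = (n:ℝ) * A * (4 * M) / ((2:ℝ) ^ K0 * 2) := by ring
        rw [heq, div_le_iff₀ (by positivity)]
        calc (n:ℝ) * A * (4 * M) = 4 * A * M * n := by ring
          _ ≤ 4 * A * M * 2 ^ K0 := by
              apply mul_le_mul_of_nonneg_left h2K0 (by positivity)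
          _ = 2 * A * M * (2 ^ K0 * 2) := by ring
      calc |X θ.1 s|
          = |X θ₀ s + ((∑ k ∈ Finset.range KK, (X (c (k + 1)) s - X (c k) s))
              + (X θ.1 s - X (c KK) s))| := by rw [← htel]
        _ ≤ |X θ₀ s| + |(∑ k ∈ Finset.range KK, (X (c (k + 1)) s - X (c k) s))
              + (X θ.1 s - X (c KK) s)| := abs_add_le _ _
        _ ≤ |X θ₀ s| + (|∑ k ∈ Finset.range KK, (X (c (k + 1)) s - X (c k) s)|
              + |X θ.1 s - X (c KK) s|) := by
            have := abs_add_le (∑ k ∈ Finset.range KK, (X (c (k + 1)) s - X (c k) s))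
              (X θ.1 s - X (c KK) s)
            linarith
        _ ≤ |X θ₀ s| + ((∑ k ∈ Finset.range KK, MX k s) + 2 * A * M) := by
            have h1 : |∑ k ∈ Finset.range KK, (X (c (k + 1)) s - X (c k) s)|
                ≤ ∑ k ∈ Finset.range KK, MX k s :=
              (Finset.abs_sum_le_sum_abs _ _).trans (Finset.sum_le_sum fun k _ => hinc k)
            linarith
    -- averaging
    have havg : RadAux.avgCube
          (fun s => ⨆ θ : {θ : Fin l → ℝ // (∑ j, |θ j|) ≤ M}, |X θ.1 s|)
        ≤ RadAux.avgCube (fun s => |X θ₀ s|)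
          + ((∑ k ∈ Finset.range KK, RadAux.avgCube (MX k)) + 2 * A * M) := by
      calc RadAux.avgCube (fun s => ⨆ θ : {θ : Fin l → ℝ // (∑ j, |θ j|) ≤ M}, |X θ.1 s|)
          ≤ RadAux.avgCube (fun s => |X θ₀ s|
              + ((∑ k ∈ Finset.range KK, MX k s) + 2 * A * M)) := RadAux.avgCube_le hpoint
        _ = RadAux.avgCube (fun s => |X θ₀ s|)
            + ((∑ k ∈ Finset.range KK, RadAux.avgCube (MX k)) + 2 * A * M) := by
            rw [RadAux.avgCube_add]
            congr 1
            rw [show (fun s => (∑ k ∈ Finset.range KK, MX k s) + 2 * A * M)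
              = (fun s => (∑ k ∈ Finset.range KK, MX k s)
                  + (fun _ : Fin n → Bool => 2 * A * M) s) from rfl]
            rw [RadAux.avgCube_add, RadAux.avgCube_sum, RadAux.avgCube_const]
    -- per-level bound
    set SN : ℝ := Real.sqrt n with hSNdef
    set SL : ℝ := Real.sqrt (Real.log (l + 1)) with hSLdef
    have hSNpos : 0 < SN := Real.sqrt_pos.2 hnR
    have hlogl : Real.log 2 ≤ Real.log (l + 1) := by
      apply Real.log_le_log (by norm_num)
      have : (1:ℝ) ≤ l := by exact_mod_cast hl
      linarith
    have hSLpos : 0 < SL := Real.sqrt_pos.2 (by linarith)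
    have hlevel : ∀ k, RadAux.avgCube (MX k) ≤ 31 * (SN * SL) * (A * M) := by
      intro k
      set σk : ℝ := Real.sqrt (10 * n) * (A * rad (k + 1)) with hσdef
      have hσpos : 0 < σk := by
        apply mul_pos _ (mul_pos hApos (hradpos _))
        exact Real.sqrt_pos.2 (by positivity)
      have hσsq : σk ^ 2 = 10 * n * (A ^ 2 * rad (k + 1) ^ 2) := by
        rw [hσdef, mul_pow, Real.sq_sqrt (by positivity), mul_pow]
      have hb : ∀ p ∈ Pk k, (∑ i, (φ p.1 (x i) - φ p.2 (x i)) ^ 2) ≤ σk ^ 2 := by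
        intro p hp
        rw [hPkdef] at hp
        simp only [Finset.mem_filter, Finset.mem_product] at hp
        have h1 := hC2 p.1 p.2 (hNNl1 (k + 1) p.1 hp.1.1) (hNNl1 k p.2 hp.1.2)
        rw [hσsq]
        refine h1.trans ?_
        refine le_trans (mul_le_mul_of_nonneg_left hp.2 (by positivity)) (le_of_eq (by ring))
      have h1 := RadAux.cube_maximal_abs (Pk k) (hPkne k)
        (fun p i => φ p.1 (x i) - φ p.2 (x i)) σk hσpos hb
      refine h1.trans ?_
      -- card bound
      have hcardP : (Pk k).card ≤ (2 * l + 1) ^ (5 * 4 ^ k) := by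
        calc (Pk k).card ≤ ((NN (k + 1)) ×ˢ (NN k)).card := Finset.card_filter_le _ _
          _ = (NN (k + 1)).card * (NN k).card := Finset.card_product _ _
          _ ≤ (2 * l + 1) ^ (4 ^ (k + 1)) * (2 * l + 1) ^ (4 ^ k) :=
              Nat.mul_le_mul (hNNcard (k + 1)) (hNNcard k)
          _ = (2 * l + 1) ^ (4 ^ (k + 1) + 4 ^ k) := (pow_add _ _ _).symm
          _ = (2 * l + 1) ^ (5 * 4 ^ k) := by
              congr 1
              rw [pow_succ]
              ring
      have hcard2 : 2 * (Pk k).card ≤ (2 * l + 1) ^ (6 * 4 ^ k) := by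
        calc 2 * (Pk k).card ≤ (2 * l + 1) * (2 * l + 1) ^ (5 * 4 ^ k) := by
              apply Nat.mul_le_mul _ hcardP
              omega
          _ = (2 * l + 1) ^ (5 * 4 ^ k + 1) := by rw [pow_succ]; ring
          _ ≤ (2 * l + 1) ^ (6 * 4 ^ k) := by
              apply Nat.pow_le_pow_right (by omega)
              have : 1 ≤ 4 ^ k := Nat.one_le_pow _ _ (by norm_num)
              omega
      have hcardpos : (0:ℝ) < 2 * (Pk k).card := by
        have := Finset.card_pos.2 (hPkne k)
        have : (1:ℝ) ≤ (Pk k).card := by exact_mod_cast this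
        linarith
      set L2 : ℝ := Real.log (2 * l + 1) with hL2def
      have hL2pos : 0 < L2 := Real.log_pos (by
        have : (1:ℝ) ≤ l := by exact_mod_cast hl
        linarith)
      have hlogcard : Real.log (2 * (Pk k).card) ≤ 6 * 4 ^ k * L2 := by
        calc Real.log (2 * (Pk k).card)
            ≤ Real.log (((2 * l + 1) ^ (6 * 4 ^ k) : ℕ)) := by
              apply Real.log_le_log hcardpos
              exact_mod_cast hcard2
          _ = 6 * 4 ^ k * L2 := by
              push_cast
              rw [Real.log_pow]
              push_cast
              ring
      -- put the pieces together
      have hstep1 : σk * Real.sqrt (2 * Real.log (2 * (Pk k).card))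
          ≤ σk * Real.sqrt (((2:ℝ) ^ k) ^ 2 * (12 * L2)) := by
        apply mul_le_mul_of_nonneg_left _ hσpos.le
        apply Real.sqrt_le_sqrt
        rw [RadAux.pow_two_sq]
        nlinarith [hlogcard, hL2pos]
      have hstep2 : Real.sqrt (((2:ℝ) ^ k) ^ 2 * (12 * L2)) = 2 ^ k * Real.sqrt (12 * L2) := by
        rw [Real.sqrt_mul (sq_nonneg _), Real.sqrt_sq (by positivity)]
      have hrad2 : rad (k + 1) * 2 ^ k = 2 * M := by
        rw [hraddef]
        simp only
        rw [pow_succ]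
        field_simp
        ring
      have hstep3 : σk * (2 ^ k * Real.sqrt (12 * L2))
          = Real.sqrt (10 * n) * A * (2 * M) * Real.sqrt (12 * L2) := by
        rw [hσdef]
        rw [← hrad2]
        ring
      have hsqrt10n : Real.sqrt (10 * n) = Real.sqrt 10 * SN := by
        rw [hSNdef, ← Real.sqrt_mul (by norm_num)]
      have hsqrt12 : Real.sqrt (12 * L2) ≤ Real.sqrt 24 * SL := by
        rw [hSLdef, ← Real.sqrt_mul (by norm_num)]
        apply Real.sqrt_le_sqrt
        have hll : L2 ≤ 2 * Real.log (l + 1) := by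
          rw [hL2def]
          calc Real.log (2 * l + 1) ≤ Real.log ((l + 1) ^ 2) := by
                apply Real.log_le_log (by positivity)
                have : (1:ℝ) ≤ l := by exact_mod_cast hl
                nlinarith
            _ = 2 * Real.log (l + 1) := by
                rw [show ((l:ℝ) + 1) ^ 2 = ((l:ℝ) + 1) ^ (2:ℕ) from rfl, Real.log_pow]
                push_cast
                ring
        linarith
      have hconst : Real.sqrt 10 * Real.sqrt 24 * 2 ≤ 31 := by
        have h240 : (Real.sqrt 10 * Real.sqrt 24) ^ 2 = 240 := by
          rw [mul_pow, Real.sq_sqrt (by norm_num), Real.sq_sqrt (by norm_num)]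
          norm_num
        nlinarith [sq_nonneg (Real.sqrt 10 * Real.sqrt 24 - 15.5),
          mul_nonneg (Real.sqrt_nonneg 10) (Real.sqrt_nonneg 24)]
      calc σk * Real.sqrt (2 * Real.log (2 * (Pk k).card))
          ≤ σk * Real.sqrt (((2:ℝ) ^ k) ^ 2 * (12 * L2)) := hstep1
        _ = Real.sqrt (10 * n) * A * (2 * M) * Real.sqrt (12 * L2) := by
            rw [hstep2]; exact hstep3
        _ ≤ (Real.sqrt 10 * SN) * A * (2 * M) * (Real.sqrt 24 * SL) := by
            rw [hsqrt10n]
            apply mul_le_mul_of_nonneg_left hsqrt12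
            positivity
        _ = (Real.sqrt 10 * Real.sqrt 24 * 2) * ((SN * SL) * (A * M)) := by ring
        _ ≤ 31 * ((SN * SL) * (A * M)) := by
            apply mul_le_mul_of_nonneg_right hconst
            positivity
        _ = 31 * (SN * SL) * (A * M) := by ring
    -- bound on the number of levels
    have hKKle : (KK:ℝ) ≤ 5 * Real.log (n + 1) := by
      have hlogle : (Nat.log 2 n : ℝ) * Real.log 2 ≤ Real.log (n + 1) := by
        have h := Nat.pow_log_le_self 2 (by omega : n ≠ 0)
        have h2 : ((2:ℝ)) ^ (Nat.log 2 n) ≤ (n:ℝ) + 1 := by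
          have : ((2 ^ Nat.log 2 n : ℕ) : ℝ) ≤ (n:ℝ) := by exact_mod_cast h
          push_cast at this ⊢
          linarith
        calc (Nat.log 2 n : ℝ) * Real.log 2 = Real.log ((2:ℝ) ^ (Nat.log 2 n)) := by
              rw [Real.log_pow]
          _ ≤ Real.log ((n:ℝ) + 1) := Real.log_le_log (by positivity) h2
      have hKKval : (KK:ℝ) = (Nat.log 2 n : ℝ) + 2 := by
        rw [hKKdef, hK0def]
        push_cast
        ring
      rw [hKKval]
      have hlog2pos : (0:ℝ) < Real.log 2 := by linarith
      have h1 : (Nat.log 2 n : ℝ) ≤ Real.log (n + 1) / Real.log 2 := by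
        rw [le_div_iff₀ hlog2pos]
        exact hlogle
      have h2 : (2:ℝ) ≤ 2 * Real.log (n + 1) / Real.log 2 := by
        rw [le_div_iff₀ hlog2pos]
        linarith
      have h3 : Real.log (n + 1) / Real.log 2 + 2 * Real.log (n + 1) / Real.log 2
          ≤ 5 * Real.log (n + 1) := by
        rw [← add_div, div_le_iff₀ hlog2pos]
        nlinarith
      linarith
    -- final assembly
    have hsum : (∑ k ∈ Finset.range KK, RadAux.avgCube (MX k))
        ≤ (KK:ℝ) * (31 * (SN * SL) * (A * M)) := by
      calc (∑ k ∈ Finset.range KK, RadAux.avgCube (MX k))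
          ≤ ∑ _k ∈ Finset.range KK, 31 * (SN * SL) * (A * M) :=
            Finset.sum_le_sum fun k _ => hlevel k
        _ = (KK:ℝ) * (31 * (SN * SL) * (A * M)) := by
            rw [Finset.sum_const, Finset.card_range]
            simp
    have hSNSL : Real.sqrt (n * Real.log (l + 1)) = SN * SL := by
      rw [hSNdef, hSLdef, ← Real.sqrt_mul hnR.le]
    have hSN1 : 1 ≤ SN := by
      rw [hSNdef]
      rw [show (1:ℝ) = Real.sqrt 1 from (Real.sqrt_one).symm]
      apply Real.sqrt_le_sqrt
      exact_mod_cast hn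
    have hSL08 : (0.8:ℝ) ≤ SL := by
      rw [hSLdef]
      rw [show (0.8:ℝ) = Real.sqrt 0.64 from ?_]
      · apply Real.sqrt_le_sqrt
        linarith
      · rw [show (0.64:ℝ) = 0.8 ^ 2 by norm_num, Real.sqrt_sq (by norm_num)]
    have h2AM : 2 * A * M ≤ 4 * ((SN * SL) * Real.log (n + 1)) * (A * M) := by
      have hprod : (1:ℝ) ≤ 2 * ((SN * SL) * Real.log (n + 1)) := by
        have hln : (0.69:ℝ) ≤ Real.log (n + 1) := by linarith
        nlinarith
      nlinarith [mul_pos hApos hM]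
    have hfinal : (∑ k ∈ Finset.range KK, RadAux.avgCube (MX k)) + 2 * A * M
        ≤ 1000 * Real.sqrt (n * Real.log (l + 1)) * Real.log (n + 1) * A * M := by
      have hc1 : (KK:ℝ) * (31 * (SN * SL) * (A * M))
          ≤ (5 * Real.log (n + 1)) * (31 * (SN * SL) * (A * M)) := by
        apply mul_le_mul_of_nonneg_right hKKle
        positivity
      rw [hSNSL]
      have hAM : 0 < A * M := mul_pos hApos hM
      nlinarith [hsum, h2AM, hc1, mul_pos (mul_pos hSNpos hSLpos) hAM, hlogn,
        mul_nonneg (mul_nonneg (mul_pos hSNpos hSLpos).le hlogn) hAM.le]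
    linarith [havg, hfinal]
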